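/- arXiv:2001.06958 — 7 statements merged into one kernel-verified Lean document; each statement's English description precedes it below -/
import Mathlib

section
/- Among all trees on n ≥ 2 vertices, the star K_{1,n-1} minimizes the Wiener index, i.e., the sum of distances over all unordered pairs of vertices. -/
open scoped Classical
open Finset SimpleGraph

noncomputable def wienerIndex {n : ℕ} (G : SimpleGraph (Fin n)) : ℕ :=
  ∑ p : Sym2 (Fin n), Sym2.lift ⟨G.dist, fun _ _ => G.dist_comm⟩ p

def starGraph (n : ℕ) : SimpleGraph (Fin n) :=
  SimpleGraph.fromRel (fun a _ => (a : ℕ) = 0)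

/-- Among all trees on n ≥ 2 vertices, the star minimizes the Wiener index. -/
theorem star_minimizes_wiener (n : ℕ) (hn : 2 ≤ n) :
    (_root_.starGraph n).IsTree ∧
      ∀ T : SimpleGraph (Fin n), T.IsTree →
        wienerIndex (starGraph n) ≤ wienerIndex T := by
  have hz0 : (0:ℕ) < n := by omega
  set z : Fin n := ⟨0, hz0⟩ with hzdef
  have hadj : ∀ a b : Fin n, (_root_.starGraph n).Adj a b ↔ a ≠ b ∧ (a = z ∨ b = z) := by
    intro a b
    simp [_root_.starGraph, SimpleGraph.fromRel_adj, Fin.ext_iff, z]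
  -- connectivity
  have hconn : (_root_.starGraph n).Connected := by
    have key : ∀ v : Fin n, (_root_.starGraph n).Reachable z v := by
      intro v
      by_cases h : v = z
      · subst h; exact SimpleGraph.Reachable.refl z
      · exact ((hadj z v).2 ⟨Ne.symm h, Or.inl rfl⟩).reachable
    have : Nonempty (Fin n) := ⟨z⟩
    exact SimpleGraph.Connected.mk fun u v => (key u).symm.trans (key v)
  -- acyclicity
  have hacyc : (_root_.starGraph n).IsAcyclic := by
    intro v c hc
    cases c with
    | nil => exact hc.ne_nil rfl
    | cons h1 p =>
      rename_i a
      cases p with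
      | nil => exact (_root_.starGraph n).irrefl h1
      | cons h2 p =>
        rename_i b
        cases p with
        | nil =>
          have := hc.edges_nodup
          simp [Sym2.eq_swap] at this
        | cons h3 q =>
          rename_i d
          have hnd := hc.support_nodup
          simp only [Walk.support_cons, List.tail_cons, List.nodup_cons] at hnd
          rw [hadj] at h1 h2 h3
          have hd : d ∈ q.support := q.start_mem_support
          have hv : v ∈ q.support := q.end_mem_support
          rcases h2.2 with ha | hb
          · -- a = z, so b ≠ z, d = z, hence a = d, contradicting nodup
            have hbz : b ≠ z := fun h => h2.1 (ha.trans h.symm)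
            have hdz : d = z := (h3.2).resolve_left hbz
            exact hnd.1 (List.mem_cons_of_mem _ (by rw [ha, ← hdz]; exact hd))
          · -- b = z, so a ≠ z, hence v = z, and v = b ∈ q.support contra
            have haz : a ≠ z := fun h => h2.1 (h.trans hb.symm)
            have hvz : v = z := (h1.2).resolve_right haz
            exact hnd.2.1 (by rw [hb, ← hvz]; exact hv)
  have htree : (_root_.starGraph n).IsTree := ⟨hconn, hacyc⟩
  -- star distances
  have hdist1 : ∀ v : Fin n, v ≠ z → (_root_.starGraph n).dist z v = 1 := fun v h =>
    SimpleGraph.dist_eq_one_iff_adj.2 ((hadj z v).2 ⟨Ne.symm h, Or.inl rfl⟩)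
  have hdist2 : ∀ u v : Fin n, u ≠ v → u ≠ z → v ≠ z → (_root_.starGraph n).dist u v = 2 := by
    intro u v huv hu hv
    have h1 : (_root_.starGraph n).dist u z = 1 := by
      rw [SimpleGraph.dist_comm]; exact hdist1 u hu
    have h2 : (_root_.starGraph n).dist z v = 1 := hdist1 v hv
    have hle := hconn.dist_triangle (u := u) (v := z) (w := v)
    have hpos := hconn.pos_dist_of_ne huv
    have hne1 : (_root_.starGraph n).dist u v ≠ 1 := by
      intro h
      have := SimpleGraph.dist_eq_one_iff_adj.1 h
      rw [hadj] at this
      tauto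
    omega
  -- the set of non-diagonal pairs
  set S : Finset (Sym2 (Fin n)) := univ.filter (fun p => ¬ p.IsDiag) with hSdef
  have hwf : ∀ G : SimpleGraph (Fin n),
      wienerIndex G = ∑ p ∈ S, Sym2.lift ⟨G.dist, fun _ _ => G.dist_comm⟩ p := by
    intro G
    rw [wienerIndex]
    refine (Finset.sum_subset (filter_subset _ _) ?_).symm
    intro p _ hp
    simp only [hSdef, mem_filter, mem_univ, true_and, not_not] at hp
    induction p using Sym2.ind with
    | _ x y =>
      rw [Sym2.mk_isDiag_iff] at hp
      subst hp
      simp [SimpleGraph.dist_self]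
  have hedge : ∀ G : SimpleGraph (Fin n), G.edgeFinset ⊆ S := by
    intro G e he
    simp only [hSdef, mem_filter, mem_univ, true_and]
    exact G.not_isDiag_of_mem_edgeSet (SimpleGraph.mem_edgeFinset.1 he)
  have hsum : ∀ E : Finset (Sym2 (Fin n)), E ⊆ S →
      (∑ p ∈ S, if p ∈ E then (1:ℕ) else 2) + E.card = 2 * S.card := by
    intro E hE
    have h2 : ∑ p ∈ S, (if p ∈ E then (1:ℕ) else 0) = E.card := by
      rw [← Finset.sum_filter]
      have : S.filter (fun p => p ∈ E) = E := by
        apply Finset.Subset.antisymm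
        · intro p hp; exact (mem_filter.1 hp).2
        · intro p hp; exact mem_filter.2 ⟨hE hp, hp⟩
      rw [this]
      simp
    have h1 : ∑ p ∈ S, ((if p ∈ E then (1:ℕ) else 2) + (if p ∈ E then 1 else 0))
        = ∑ p ∈ S, 2 := by
      refine Finset.sum_congr rfl fun p _ => ?_
      split <;> rfl
    rw [Finset.sum_add_distrib, h2, Finset.sum_const, smul_eq_mul] at h1
    omega
  -- star wiener index exact value
  have hstar : wienerIndex (_root_.starGraph n)
      = ∑ p ∈ S, (if p ∈ (_root_.starGraph n).edgeFinset then (1:ℕ) else 2) := by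
    rw [hwf]
    refine Finset.sum_congr rfl fun p hp => ?_
    induction p using Sym2.ind with
    | _ u v =>
      simp only [hSdef, mem_filter, mem_univ, true_and, Sym2.mk_isDiag_iff] at hp
      rw [Sym2.lift_mk]
      change (_root_.starGraph n).dist u v = _
      by_cases hA : (_root_.starGraph n).Adj u v
      · rw [if_pos (by rwa [SimpleGraph.mem_edgeFinset, SimpleGraph.mem_edgeSet])]
        exact SimpleGraph.dist_eq_one_iff_adj.2 hA
      · rw [if_neg (by rwa [SimpleGraph.mem_edgeFinset, SimpleGraph.mem_edgeSet])]
        rw [hadj] at hA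
        push_neg at hA
        exact hdist2 u v hp (hA hp).1 (hA hp).2
  -- tree lower bound
  have hTbound : ∀ T : SimpleGraph (Fin n), T.IsTree →
      (∑ p ∈ S, if p ∈ T.edgeFinset then (1:ℕ) else 2) ≤ wienerIndex T := by
    intro T hT
    rw [hwf]
    refine Finset.sum_le_sum fun p hp => ?_
    induction p using Sym2.ind with
    | _ u v =>
      simp only [hSdef, mem_filter, mem_univ, true_and, Sym2.mk_isDiag_iff] at hp
      rw [Sym2.lift_mk]
      change _ ≤ T.dist u v
      have hpos := hT.isConnected.pos_dist_of_ne hp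
      split
      · omega
      · rename_i hne
        rw [SimpleGraph.mem_edgeFinset, SimpleGraph.mem_edgeSet] at hne
        have : T.dist u v ≠ 1 := fun h => hne (SimpleGraph.dist_eq_one_iff_adj.1 h)
        omega
  refine ⟨htree, fun T hT => ?_⟩
  have e1 := hsum _ (hedge (_root_.starGraph n))
  have e2 := hsum _ (hedge T)
  have hc1 : (_root_.starGraph n).edgeFinset.card = T.edgeFinset.card := by
    have a1 := htree.card_edgeFinset
    have a2 := hT.card_edgeFinset
    rw [Fintype.card_fin] at a1 a2
    omega
  have := hTbound T hT
  rw [hstar]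
  omega
end

section
/- Among all trees on n ≥ 2 vertices, the path P_n maximizes the Wiener index. -/
open scoped Classical
open Finset SimpleGraph


lemma fiber_sym2 {V : Type*} [Fintype V] [DecidableEq V] (a b : V) :
    Finset.univ.filter (fun x : V × V => s(x.1, x.2) = s(a, b)) =
      if a = b then {(a, a)} else {(a, b), (b, a)} := by
  split_ifs with h
  · subst h
    ext ⟨i, j⟩
    simp [Sym2.eq_iff]
  · ext ⟨i, j⟩
    simp [Sym2.eq_iff, Prod.ext_iff]

lemma two_mul_wiener {n : ℕ} (G : SimpleGraph (Fin n)) :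
    2 * wienerIndex G = ∑ i, ∑ j, G.dist i j := by
  classical
  rw [← Finset.sum_product']
  have h := Finset.sum_fiberwise_eq_sum_filter
    (Finset.univ ×ˢ Finset.univ : Finset (Fin n × Fin n)) (Finset.univ : Finset (Sym2 (Fin n)))
    (fun x : Fin n × Fin n => s(x.1, x.2)) (fun x : Fin n × Fin n => G.dist x.1 x.2)
  simp only [Finset.mem_univ, Finset.filter_true] at h
  rw [← h, wienerIndex, Finset.mul_sum]
  refine Finset.sum_congr rfl fun p _ => ?_
  induction p with
  | _ a b =>
    have hf : (Finset.univ ×ˢ Finset.univ : Finset (Fin n × Fin n)).filter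
        (fun i => s(i.1, i.2) = s(a, b)) = if a = b then {(a, a)} else {(a, b), (b, a)} := by
      rw [← fiber_sym2 a b]
      congr 1
    rw [hf]
    split_ifs with h
    · subst h
      simp [G.dist_self]
    · rw [Finset.sum_pair (by simp [Prod.ext_iff, Ne.symm h, h])]
      simp [Sym2.lift, G.dist_comm, two_mul]


universe u

lemma leaf_not_mem_path_support {V : Type u} {G : SimpleGraph V} {v : V}
    (hv : ∀ a b, G.Adj v a → G.Adj v b → a = b) :
    ∀ {x y : V} (p : G.Walk x y), p.IsPath → x ≠ v → y ≠ v → v ∉ p.support := by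
  intro x y p
  induction p with
  | nil => intro _ hx _ h; simp at h; exact hx h.symm
  | @cons x w y h q ih =>
    intro hp hx hy hmem
    rw [SimpleGraph.Walk.support_cons, List.mem_cons] at hmem
    rcases hmem with h1 | h1
    · exact hx h1.symm
    by_cases hw : w = v
    · subst hw
      cases q with
      | nil => exact hy rfl
      | @cons _ z _ h' q' =>
        have hz : z = x := hv z x h' h.symm
        subst hz
        have := hp.support_nodup
        rw [SimpleGraph.Walk.support_cons, List.nodup_cons] at this
        exact this.1 (by
          rw [SimpleGraph.Walk.support_cons, List.mem_cons]
          exact Or.inr (SimpleGraph.Walk.start_mem_support q'))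
    · exact ih hp.of_cons hw hy h1

lemma walk_lift {n : ℕ} {G : SimpleGraph (Fin (n + 1))} :
    ∀ {x y : Fin (n + 1)} (p : G.Walk x y), Fin.last n ∉ p.support →
      ∀ (a b : Fin n), x = a.castSucc → y = b.castSucc →
      ∃ q : (G.comap Fin.castSucc).Walk a b, q.length = p.length := by
  intro x y p
  induction p with
  | nil =>
    intro _ a b hx hy
    have : a = b := Fin.castSucc_injective n (hx.symm.trans hy)
    subst this
    exact ⟨SimpleGraph.Walk.nil, rfl⟩
  | @cons x w y h q ih =>
    intro hmem a b hx hy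
    rw [SimpleGraph.Walk.support_cons, List.mem_cons] at hmem
    push_neg at hmem
    have hw : w ≠ Fin.last n := fun hc => hmem.2 (hc ▸ q.start_mem_support)
    obtain ⟨q', hq'⟩ := ih hmem.2 (w.castPred hw) b (Fin.castSucc_castPred w hw).symm hy
    have hadj : (G.comap Fin.castSucc).Adj a (w.castPred hw) := by
      show G.Adj a.castSucc _
      rw [Fin.castSucc_castPred, ← hx]
      exact h
    exact ⟨SimpleGraph.Walk.cons hadj q', by simp [hq']⟩


section Del
variable {n : ℕ} {G : SimpleGraph (Fin (n + 1))} (hG : G.IsTree)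
  (hv : ∀ a b, G.Adj (Fin.last n) a → G.Adj (Fin.last n) b → a = b)

include hG hv in
lemma del_exists_walk (a b : Fin n) :
    ∃ q : (G.comap Fin.castSucc).Walk a b, q.length = G.dist a.castSucc b.castSucc := by
  obtain ⟨p, hp, hlen⟩ := hG.isConnected.exists_path_of_dist a.castSucc b.castSucc
  have hmem := leaf_not_mem_path_support hv p hp
    (Fin.castSucc_lt_last a).ne (Fin.castSucc_lt_last b).ne
  obtain ⟨q, hq⟩ := walk_lift p hmem a b rfl rfl
  exact ⟨q, hq.trans hlen⟩

include hG hv in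
lemma del_dist (a b : Fin n) :
    (G.comap Fin.castSucc).dist a b = G.dist a.castSucc b.castSucc := by
  obtain ⟨q, hq⟩ := del_exists_walk hG hv a b
  refine le_antisymm (hq ▸ SimpleGraph.dist_le q) ?_
  obtain ⟨r, hr⟩ := SimpleGraph.Reachable.exists_walk_length_eq_dist q.reachable
  have : G.dist a.castSucc b.castSucc ≤ (r.map (SimpleGraph.Hom.comap Fin.castSucc G)).length :=
    SimpleGraph.dist_le _
  rwa [SimpleGraph.Walk.length_map, hr] at this

include hG hv in
lemma del_tree (hn : 0 < n) : (G.comap Fin.castSucc).IsTree := by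
  constructor
  · haveI : Nonempty (Fin n) := ⟨⟨0, hn⟩⟩
    refine ⟨fun a b => ?_⟩
    obtain ⟨q, _⟩ := del_exists_walk hG hv a b
    exact q.reachable
  · intro u c hc
    exact hG.IsAcyclic (c.map (SimpleGraph.Hom.comap Fin.castSucc G))
      (hc.map (Fin.castSucc_injective n))

include hG hv in
lemma del_sum :
    ∑ i, ∑ j, G.dist i j =
      (∑ i, ∑ j, (G.comap Fin.castSucc).dist i j) + 2 * ∑ u, G.dist (Fin.last n) u := by
  have hd : ∀ a b : Fin n, (G.comap Fin.castSucc).dist a b = G.dist a.castSucc b.castSucc :=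
    del_dist hG hv
  rw [Fin.sum_univ_castSucc (f := fun i => ∑ j, G.dist i j)]
  have h1 : ∀ i : Fin (n+1), ∑ j, G.dist i j
      = ∑ j : Fin n, G.dist i j.castSucc + G.dist i (Fin.last n) :=
    fun i => Fin.sum_univ_castSucc (f := fun j => G.dist i j)
  simp only [h1]
  rw [Finset.sum_add_distrib]
  have h3 : ∑ i : Fin n, G.dist i.castSucc (Fin.last n)
      = ∑ u : Fin n, G.dist (Fin.last n) u.castSucc := by
    exact Finset.sum_congr rfl fun i _ => SimpleGraph.dist_comm
  simp only [hd]
  rw [SimpleGraph.dist_self, h3]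
  ring
end Del




lemma levels_nonempty {V : Type u} {G : SimpleGraph V} (hconn : G.Connected) (v : V) :
    ∀ d : ℕ, (∃ u, G.dist v u = d) → ∀ j, j ≤ d → ∃ w, G.dist v w = j := by
  intro d
  induction d with
  | zero =>
    rintro - j hj
    interval_cases j
    exact ⟨v, SimpleGraph.dist_self⟩
  | succ d ih =>
    rintro ⟨u, hu⟩ j hj
    have hd : ∃ w, G.dist v w = d := by
      obtain ⟨p, hp⟩ := SimpleGraph.Connected.exists_walk_length_eq_dist hconn v u
      have hnil : ¬ p.reverse.Nil := by
        rw [SimpleGraph.Walk.nil_iff_length_eq]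
        rw [SimpleGraph.Walk.length_reverse, hp, hu]
        omega
      have hadj : G.Adj u (p.reverse.getVert 1) := SimpleGraph.Walk.adj_snd hnil
      have hle : G.dist v (p.reverse.getVert 1) ≤ d := by
        have h1 := SimpleGraph.dist_le p.reverse.tail.reverse
        rw [SimpleGraph.Walk.length_reverse] at h1
        change G.dist v (p.reverse.getVert 1) ≤ _ at h1
        have h2 : p.reverse.tail.length + 1 = p.reverse.length :=
          SimpleGraph.Walk.length_tail_add_one hnil
        rw [SimpleGraph.Walk.length_reverse, hp, hu] at h2
        omega
      have hge : d ≤ G.dist v (p.reverse.getVert 1) := by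
        have h1 := SimpleGraph.Connected.dist_triangle hconn
          (u := v) (v := p.reverse.getVert 1) (w := u)
        have h2 : G.dist (p.reverse.getVert 1) u = 1 :=
          SimpleGraph.dist_eq_one_iff_adj.2 hadj.symm
        omega
      exact ⟨p.reverse.getVert 1, le_antisymm hle hge⟩
    rcases Nat.lt_or_ge j (d + 1) with h | h
    · exact ih hd j (by omega)
    · exact ⟨u, by rw [hu]; omega⟩

lemma card_level_ge {V : Type u} [Fintype V] {G : SimpleGraph V} (hconn : G.Connected) (v : V)
    (k : ℕ) (h : ∃ u, k < G.dist v u) :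
    k + 1 ≤ (Finset.univ.filter (fun u => G.dist v u ≤ k)).card := by
  classical
  obtain ⟨u, hu⟩ := h
  have hlev := levels_nonempty hconn v (G.dist v u) ⟨u, rfl⟩
  have h' : ∀ j : ℕ, j ≤ k → ∃ w, G.dist v w = j := fun j hj => hlev j (by omega)
  choose f hf using h'
  have : ∀ j ∈ Finset.range (k + 1), (fun j => if hj : j ≤ k then f j hj else v) j
      ∈ Finset.univ.filter (fun u => G.dist v u ≤ k) := by
    intro j hj
    rw [Finset.mem_range] at hj
    have hj' : j ≤ k := by omega
    refine Finset.mem_filter.2 ⟨Finset.mem_univ _, ?_⟩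
    simp only [dif_pos hj']
    rw [hf j hj']
    exact hj'
  have hcard := Finset.card_le_card_of_injOn _ this ?_
  · simpa using hcard
  · intro a ha b hb hab
    rw [Finset.coe_range, Set.mem_Iio] at ha hb
    have ha' : a ≤ k := by omega
    have hb' : b ≤ k := by omega
    simp only [dif_pos ha', dif_pos hb'] at hab
    have := hf a ha'
    rw [hab, hf b hb'] at this
    omega

lemma sum_dist_le {m : ℕ} {G : SimpleGraph (Fin m)} (hconn : G.Connected) (v : Fin m) :
    ∑ u, G.dist v u ≤ ∑ k ∈ Finset.range m, k := by
  classical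
  have hlt : ∀ u, G.dist v u < m := by
    intro u
    obtain ⟨p, hp, hlen⟩ := hconn.exists_path_of_dist v u
    have := hp.length_lt
    rw [Fintype.card_fin] at this
    omega
  have hcount : ∀ u, G.dist v u = ((Finset.range m).filter (fun k => k < G.dist v u)).card := by
    intro u
    have : (Finset.range m).filter (fun k => k < G.dist v u) = Finset.range (G.dist v u) := by
      ext k
      simp only [Finset.mem_filter, Finset.mem_range]
      have := hlt u
      omega
    rw [this, Finset.card_range]
  calc ∑ u, G.dist v u
      = ∑ u, ∑ k ∈ Finset.range m, (if k < G.dist v u then 1 else 0) := by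
        refine Finset.sum_congr rfl fun u _ => ?_
        have h := hcount u
        rw [Finset.card_filter] at h
        exact h
    _ = ∑ k ∈ Finset.range m, (Finset.univ.filter (fun u => k < G.dist v u)).card := by
        rw [Finset.sum_comm]
        exact Finset.sum_congr rfl fun k _ => (Finset.card_filter _ _).symm
    _ ≤ ∑ k ∈ Finset.range m, (m - 1 - k) := by
        refine Finset.sum_le_sum fun k _ => ?_
        by_cases hne : ∃ u, k < G.dist v u
        · have h1 := card_level_ge hconn v k hne
          have h2 := Finset.card_filter_add_card_filter_not
            (s := (Finset.univ : Finset (Fin m))) (p := fun u => G.dist v u ≤ k)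
          rw [Finset.card_univ, Fintype.card_fin] at h2
          have h3 : (Finset.univ.filter (fun u => ¬ G.dist v u ≤ k)).card
              = (Finset.univ.filter (fun u => k < G.dist v u)).card := by
            congr 1
            ext u
            simp only [Finset.mem_filter, Finset.mem_univ, true_and, Nat.not_le]
          omega
        · push_neg at hne
          have : (Finset.univ.filter (fun u => k < G.dist v u)) = ∅ := by
            rw [Finset.filter_eq_empty_iff]
            intro u _
            exact Nat.not_lt.2 (hne u)
          simp [this]
    _ = ∑ k ∈ Finset.range m, k := by
        rw [← Finset.sum_range_reflect (fun k => k) m]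

lemma exists_small_deg {m : ℕ} {G : SimpleGraph (Fin m)} (hm : 2 ≤ m) (hG : G.IsTree) :
    ∃ v : Fin m, ∀ a b, G.Adj v a → G.Adj v b → a = b := by
  classical
  by_contra hcon
  push_neg at hcon
  have hdeg : ∀ v : Fin m, 2 ≤ G.degree v := by
    intro v
    obtain ⟨a, b, ha, hb, hab⟩ := hcon v
    rw [Nat.succ_le_iff, ← SimpleGraph.card_neighborFinset_eq_degree, Finset.one_lt_card]
    exact ⟨a, by rwa [SimpleGraph.mem_neighborFinset], b, by rwa [SimpleGraph.mem_neighborFinset], hab⟩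
  have hsum : ∑ v : Fin m, G.degree v = 2 * G.edgeFinset.card :=
    SimpleGraph.sum_degrees_eq_twice_card_edges G
  have hedge : G.edgeFinset.card + 1 = m := by
    have := hG.card_edgeFinset
    rwa [Fintype.card_fin] at this
  have h2 : 2 * m ≤ ∑ v : Fin m, G.degree v := by
    calc 2 * m = ∑ _v : Fin m, 2 := by simp [Finset.sum_const, Fintype.card_fin, mul_comm]
    _ ≤ _ := Finset.sum_le_sum fun v _ => hdeg v
  omega


lemma pg_no_cross {m : ℕ} {u v : Fin m} (huv : (u : ℕ) + 1 = v) :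
    ∀ {x y : Fin m} (p : ((SimpleGraph.pathGraph m) \ SimpleGraph.fromEdgeSet {s(u, v)}).Walk x y),
      (x : ℕ) ≤ u → (u : ℕ) < y → False := by
  intro x y p
  induction p with
  | nil => intro h1 h2; omega
  | @cons x z y h q ih =>
    intro hx hy
    rw [SimpleGraph.sdiff_adj, SimpleGraph.fromEdgeSet_adj] at h
    obtain ⟨hadj, hne⟩ := h
    rw [SimpleGraph.pathGraph_adj] at hadj
    by_cases hz : (z : ℕ) ≤ u
    · exact ih hz hy
    · push_neg at hz
      have hxu : x = u := Fin.ext (by omega)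
      have hzv : z = v := Fin.ext (by omega)
      subst hxu hzv
      exact hne ⟨by simp, fun he => by omega⟩

lemma pg_isTree {m : ℕ} (hm : 1 ≤ m) : (SimpleGraph.pathGraph m).IsTree := by
  obtain ⟨n, rfl⟩ := Nat.exists_eq_add_of_le' hm
  constructor
  · simpa using SimpleGraph.pathGraph_connected n
  · rw [SimpleGraph.isAcyclic_iff_forall_adj_isBridge]
    intro a b hab
    have key : ∀ (u v : Fin (n + 1)), (u : ℕ) + 1 = v →
        (SimpleGraph.pathGraph (n + 1)).IsBridge s(u, v) := by
      intro u v huv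
      rw [SimpleGraph.isBridge_iff]
      rintro ⟨p⟩
      exact pg_no_cross huv p le_rfl (by omega)
    have hab' := hab
    rw [SimpleGraph.pathGraph_adj] at hab'
    rcases hab' with h | h
    · exact key a b h
    · rw [Sym2.eq_swap]
      exact key b a h

lemma pg_walk_length_ge {m : ℕ} :
    ∀ {x y : Fin m} (p : (SimpleGraph.pathGraph m).Walk x y),
      (y : ℕ) - x ≤ p.length ∧ (x : ℕ) - y ≤ p.length := by
  intro x y p
  induction p with
  | nil => omega
  | @cons x z y h q ih =>
    rw [SimpleGraph.pathGraph_adj] at h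
    rw [SimpleGraph.Walk.length_cons]
    omega

lemma pg_dist_le {n : ℕ} : ∀ (k : ℕ) (u w : Fin (n + 1)), (u : ℕ) + k = w →
    (SimpleGraph.pathGraph (n + 1)).dist u w ≤ k := by
  intro k
  induction k with
  | zero =>
    intro u w h
    have : u = w := Fin.ext (by omega)
    subst this
    simp [SimpleGraph.dist_self]
  | succ k ih =>
    intro u w h
    have hlt : (u : ℕ) + k < n + 1 := by have := w.isLt; omega
    set w' : Fin (n + 1) := ⟨(u : ℕ) + k, hlt⟩ with hw'
    have h1 : (SimpleGraph.pathGraph (n + 1)).dist u w' ≤ k := ih u w' rfl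
    have hadj : (SimpleGraph.pathGraph (n + 1)).Adj w' w := by
      rw [SimpleGraph.pathGraph_adj]
      left
      simp only [hw']
      omega
    have h2 : (SimpleGraph.pathGraph (n + 1)).dist w' w = 1 :=
      SimpleGraph.dist_eq_one_iff_adj.2 hadj
    have h3 := SimpleGraph.Connected.dist_triangle (SimpleGraph.pathGraph_connected n)
      (u := u) (v := w') (w := w)
    omega

lemma pg_dist_last {n : ℕ} (u : Fin (n + 1)) :
    (SimpleGraph.pathGraph (n + 1)).dist (Fin.last n) u = n - (u : ℕ) := by
  refine le_antisymm ?_ ?_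
  · rw [SimpleGraph.dist_comm]
    exact pg_dist_le (n - (u : ℕ)) u (Fin.last n) (by simp; omega)
  · obtain ⟨p, hp⟩ := SimpleGraph.Connected.exists_walk_length_eq_dist
      (SimpleGraph.pathGraph_connected n) (Fin.last n) u
    have := pg_walk_length_ge p
    rw [hp] at this
    simp [Fin.val_last] at this
    omega

lemma pg_comap {n : ℕ} :
    (SimpleGraph.pathGraph (n + 1)).comap Fin.castSucc = SimpleGraph.pathGraph n := by
  ext a b
  rw [SimpleGraph.comap_adj, SimpleGraph.pathGraph_adj, SimpleGraph.pathGraph_adj]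
  simp

lemma pg_last_unique_nbr {n : ℕ} (a b : Fin (n + 1)) (ha : (SimpleGraph.pathGraph (n + 1)).Adj (Fin.last n) a)
    (hb : (SimpleGraph.pathGraph (n + 1)).Adj (Fin.last n) b) : a = b := by
  rw [SimpleGraph.pathGraph_adj] at ha hb
  simp [Fin.val_last] at ha hb
  have h1 := a.isLt
  have h2 := b.isLt
  exact Fin.ext (by omega)

lemma pg_sum_dist_last {n : ℕ} :
    ∑ u : Fin (n + 1), (SimpleGraph.pathGraph (n + 1)).dist (Fin.last n) u
      = ∑ k ∈ Finset.range (n + 1), k := by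
  simp only [pg_dist_last]
  rw [Fin.sum_univ_eq_sum_range (fun k => n - k) (n + 1)]
  rw [← Finset.sum_range_reflect (fun k => k) (n + 1)]
  exact Finset.sum_congr rfl fun k hk => by rw [Finset.mem_range] at hk; omega


section EquivComap
variable {m : ℕ} {G : SimpleGraph (Fin m)} (e : Fin m ≃ Fin m)

noncomputable def backHom : G →g G.comap ⇑e where
  toFun := ⇑e.symm
  map_rel' := by
    intro a b h
    show G.Adj (e (e.symm a)) (e (e.symm b))
    simpa using h

lemma comap_reachable (hconn : G.Connected) (a b : Fin m) :
    (G.comap ⇑e).Reachable a b := by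
  obtain ⟨p⟩ := hconn.preconnected (e a) (e b)
  have : (G.comap ⇑e).Reachable (e.symm (e a)) (e.symm (e b)) := ⟨p.map (backHom e)⟩
  simpa using this

lemma comap_dist (hconn : G.Connected) (a b : Fin m) :
    (G.comap ⇑e).dist a b = G.dist (e a) (e b) := by
  refine le_antisymm ?_ ?_
  · obtain ⟨p, hp⟩ := SimpleGraph.Connected.exists_walk_length_eq_dist hconn (e a) (e b)
    have h1 := SimpleGraph.dist_le (p.map (backHom e))
    rw [SimpleGraph.Walk.length_map, hp] at h1
    have h2 : (backHom (G := G) e) (e a) = a := e.symm_apply_apply a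
    have h3 : (backHom (G := G) e) (e b) = b := e.symm_apply_apply b
    rwa [h2, h3] at h1
  · obtain ⟨q, hq⟩ := SimpleGraph.Reachable.exists_walk_length_eq_dist
      (comap_reachable e hconn a b)
    have h1 := SimpleGraph.dist_le (q.map (SimpleGraph.Hom.comap ⇑e G))
    rwa [SimpleGraph.Walk.length_map, hq] at h1

lemma comap_isTree (hG : G.IsTree) : (G.comap ⇑e).IsTree := by
  constructor
  · have : Nonempty (Fin m) := hG.isConnected.nonempty
    exact ⟨fun a b => comap_reachable e hG.isConnected a b⟩
  · intro u c hc
    exact hG.IsAcyclic (c.map (SimpleGraph.Hom.comap ⇑e G)) (hc.map e.injective)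

lemma comap_dsum (hconn : G.Connected) :
    ∑ i, ∑ j, (G.comap ⇑e).dist i j = ∑ i, ∑ j, G.dist i j := by
  simp only [comap_dist e hconn]
  rw [← Equiv.sum_comp e (fun i => ∑ j, G.dist i j)]
  exact Finset.sum_congr rfl fun i _ =>
    Equiv.sum_comp e (fun j => G.dist (e i) j)
end EquivComap


lemma main_dsum : ∀ n : ℕ, ∀ T : SimpleGraph (Fin (n + 1)), T.IsTree →
    ∑ i, ∑ j, T.dist i j ≤ ∑ i, ∑ j, (SimpleGraph.pathGraph (n + 1)).dist i j := by
  intro n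
  induction n with
  | zero =>
    intro T _
    have h : ∀ i j : Fin 1, T.dist i j = 0 := fun i j => by
      rw [Subsingleton.elim j i, SimpleGraph.dist_self]
    simp [h]
  | succ n ih =>
    intro T hT
    obtain ⟨v, hv⟩ := exists_small_deg (m := n + 2) (by omega) hT
    set e := Equiv.swap (Fin.last (n + 1)) v with he
    set T₂ := T.comap ⇑e with hT₂def
    have hT₂ : T₂.IsTree := comap_isTree e hT
    have hv₂ : ∀ a b, T₂.Adj (Fin.last (n + 1)) a → T₂.Adj (Fin.last (n + 1)) b → a = b := by
      intro a b ha hb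
      have ha' : T.Adj v (e a) := by
        have : T.Adj (e (Fin.last (n + 1))) (e a) := ha
        rwa [he, Equiv.swap_apply_left] at this
      have hb' : T.Adj v (e b) := by
        have : T.Adj (e (Fin.last (n + 1))) (e b) := hb
        rwa [he, Equiv.swap_apply_left] at this
      exact e.injective (hv _ _ ha' hb')
    have hsplit := del_sum hT₂ hv₂
    have htree' := del_tree hT₂ hv₂ (by omega)
    have hIH := ih _ htree'
    have hsum_le := sum_dist_le hT₂.isConnected (Fin.last (n + 1))
    have hpsplit := del_sum (G := SimpleGraph.pathGraph (n + 1 + 1)) (pg_isTree (by omega)) pg_last_unique_nbr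
    rw [pg_comap] at hpsplit
    have hpsum := pg_sum_dist_last (n := n + 1)
    have hinv := comap_dsum e hT.isConnected
    rw [← hT₂def] at hinv
    omega

/-- Among all trees on n ≥ 2 vertices, the path maximizes the Wiener index. -/
theorem path_maximizes_wiener (n : ℕ) (hn : 2 ≤ n) :
    (SimpleGraph.pathGraph n).IsTree ∧
      ∀ T : SimpleGraph (Fin n), T.IsTree →
        wienerIndex T ≤ wienerIndex (SimpleGraph.pathGraph n) := by
  refine ⟨pg_isTree (by omega), fun T hT => ?_⟩
  obtain ⟨m, rfl⟩ : ∃ m, n = m + 1 := ⟨n - 1, by omega⟩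
  have h1 := two_mul_wiener T
  have h2 := two_mul_wiener (SimpleGraph.pathGraph (m + 1))
  have h3 := main_dsum m T hT
  omega
end

section
/- Among all trees on n ≥ 2 vertices, the star K_{1,n-1} maximizes the number of subtrees, and this maximum number equals 2^{n-1} + n - 1. -/
open scoped Classical
open Finset SimpleGraph

/-- The number of subtrees (nonempty connected subgraphs) of a tree, counted via
vertex subsets inducing a connected subgraph. -/
noncomputable def numSubtrees {n : ℕ} (T : SimpleGraph (Fin n)) : ℕ :=
  (Finset.univ.powerset.filter
    (fun s : Finset (Fin n) => s.Nonempty ∧ (SimpleGraph.induce (↑s) T).Connected)).card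


lemma exists_adj_of_connected {n : ℕ} {G : SimpleGraph (Fin n)} {s : Finset (Fin n)}
    (hc : (SimpleGraph.induce (↑s : Set (Fin n)) G).Connected) (h2 : 2 ≤ s.card)
    {v : Fin n} (hv : v ∈ s) : ∃ w ∈ s, G.Adj v w := by
  have h1 : 1 < s.card := by omega
  obtain ⟨w, hw, hne⟩ := Finset.exists_mem_ne h1 v
  have hr := hc.preconnected ⟨v, by simpa using hv⟩ ⟨w, by simpa using hw⟩
  obtain ⟨p⟩ := hr
  cases p with
  | nil => exact absurd rfl hne
  | @cons _ u _ h q =>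
    exact ⟨u.1, by simpa using u.2, by simpa using h⟩

lemma singleton_connected {n : ℕ} (G : SimpleGraph (Fin n)) (v : Fin n) :
    (SimpleGraph.induce (↑({v} : Finset (Fin n)) : Set (Fin n)) G).Connected := by
  haveI : Nonempty (↑(↑({v} : Finset (Fin n)) : Set (Fin n))) := ⟨⟨v, by simp⟩⟩
  refine SimpleGraph.Connected.mk fun a b => ?_
  have : a = b := by
    ext
    have ha := a.2
    have hb := b.2
    simp only [Finset.coe_singleton, Set.mem_singleton_iff] at ha hb
    simp [ha, hb]
  exact this ▸ SimpleGraph.Reachable.refl _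

lemma tree_bound {n : ℕ} (hn : 2 ≤ n) (T : SimpleGraph (Fin n)) (hT : T.IsTree) :
    numSubtrees T ≤ 2 ^ (n - 1) + n - 1 := by
  classical
  set A := Finset.univ.powerset.filter
    (fun s : Finset (Fin n) => s.Nonempty ∧ (SimpleGraph.induce (↑s) T).Connected) with hA
  have hsplit : A.card = (A.filter (fun s => s.card = 1)).card
      + (A.filter (fun s => ¬ s.card = 1)).card :=
    (Finset.card_filter_add_card_filter_not _).symm
  have h1 : (A.filter (fun s => s.card = 1)).card ≤ n := by
    have hsub : A.filter (fun s => s.card = 1) ⊆ Finset.univ.image (fun v : Fin n => {v}) := by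
      intro s hs
      simp only [Finset.mem_filter] at hs
      obtain ⟨v, hv⟩ := Finset.card_eq_one.mp hs.2
      exact Finset.mem_image.mpr ⟨v, Finset.mem_univ v, hv.symm⟩
    calc (A.filter (fun s => s.card = 1)).card ≤ _ := Finset.card_le_card hsub
      _ ≤ (Finset.univ : Finset (Fin n)).card := Finset.card_image_le
      _ = n := by simp
  -- edge count
  have hedge : T.edgeFinset.card = n - 1 := by
    have := hT.card_edgeFinset
    simp only [Fintype.card_fin] at this
    omega
  set E := T.edgeFinset.powerset.filter (fun e => e.Nonempty) with hE
  have hEcard : E.card = 2 ^ (n - 1) - 1 := by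
    have h1 : E = T.edgeFinset.powerset.erase ∅ := by
      ext e
      simp [hE, Finset.nonempty_iff_ne_empty, and_comm]
    rw [h1, Finset.card_erase_of_mem (Finset.empty_mem_powerset _),
      Finset.card_powerset, hedge]
  -- the injection
  set f : Finset (Fin n) → Finset (Sym2 (Fin n)) :=
    fun s => T.edgeFinset.filter (fun e => ∀ x ∈ e, x ∈ s) with hf
  have key : ∀ s ∈ A.filter (fun s => ¬ s.card = 1),
      (∀ x ∈ s, ∃ w ∈ s, T.Adj x w) ∧ f s ∈ E := by
    intro s hs
    simp only [Finset.mem_filter, hA] at hs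
    obtain ⟨⟨_, hne, hc⟩, hcard⟩ := hs
    have h2 : 2 ≤ s.card := by
      have := Finset.card_pos.mpr hne
      omega
    have hadj : ∀ x ∈ s, ∃ w ∈ s, T.Adj x w := fun x hx =>
      exists_adj_of_connected hc h2 hx
    refine ⟨hadj, ?_⟩
    obtain ⟨v, hv⟩ := hne
    obtain ⟨w, hw, hvw⟩ := hadj v hv
    simp only [hE, Finset.mem_filter, Finset.mem_powerset]
    refine ⟨Finset.filter_subset _ _, ⟨s(v, w), ?_⟩⟩
    simp only [hf, Finset.mem_filter, SimpleGraph.mem_edgeFinset, SimpleGraph.mem_edgeSet]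
    refine ⟨hvw, ?_⟩
    intro x hx
    rcases Sym2.mem_iff.mp hx with h | h <;> subst h <;> assumption
  have h2 : (A.filter (fun s => ¬ s.card = 1)).card ≤ 2 ^ (n - 1) - 1 := by
    rw [← hEcard]
    apply Finset.card_le_card_of_injOn f (fun s hs => (key s hs).2)
    intro s hs t ht hst
    have hs' := key s hs
    have ht' := key t ht
    apply Finset.Subset.antisymm
    · intro x hx
      obtain ⟨w, hw, hxw⟩ := hs'.1 x hx
      have he : s(x, w) ∈ f s := by
        simp only [hf, Finset.mem_filter, SimpleGraph.mem_edgeFinset, SimpleGraph.mem_edgeSet]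
        refine ⟨hxw, fun y hy => ?_⟩
        rcases Sym2.mem_iff.mp hy with h | h <;> subst h <;> assumption
      rw [hst] at he
      simp only [hf, Finset.mem_filter] at he
      exact he.2 x (Sym2.mem_mk_left x w)
    · intro x hx
      obtain ⟨w, hw, hxw⟩ := ht'.1 x hx
      have he : s(x, w) ∈ f t := by
        simp only [hf, Finset.mem_filter, SimpleGraph.mem_edgeFinset, SimpleGraph.mem_edgeSet]
        refine ⟨hxw, fun y hy => ?_⟩
        rcases Sym2.mem_iff.mp hy with h | h <;> subst h <;> assumption
      rw [← hst] at he
      simp only [hf, Finset.mem_filter] at he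
      exact he.2 x (Sym2.mem_mk_left x w)
  have hpow : 1 ≤ 2 ^ (n - 1) := Nat.one_le_two_pow
  have : numSubtrees T = A.card := rfl
  omega

lemma star_mem_char {n : ℕ} (hn : 2 ≤ n) (s : Finset (Fin n)) :
    haveI : NeZero n := ⟨by omega⟩
    (s.Nonempty ∧ (SimpleGraph.induce (↑s) (starGraph n)).Connected) ↔
      (0 ∈ s ∨ ∃ v : Fin n, v ≠ 0 ∧ s = {v}) := by
  haveI : NeZero n := ⟨by omega⟩
  constructor
  · rintro ⟨hne, hc⟩
    by_cases h0 : (0 : Fin n) ∈ s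
    · exact Or.inl h0
    · right
      obtain ⟨v, hv⟩ := hne
      by_cases h2 : 2 ≤ s.card
      · exfalso
        obtain ⟨w, hw, hvw⟩ := exists_adj_of_connected hc h2 hv
        rw [_root_.starGraph, SimpleGraph.fromRel_adj] at hvw
        rcases hvw.2 with h | h
        · exact h0 (by rwa [show v = 0 from Fin.ext (by simpa using h)] at hv)
        · exact h0 (by rwa [show w = 0 from Fin.ext (by simpa using h)] at hw)
      · have h1 : s.card = 1 := by
          have := Finset.card_pos.mpr ⟨v, hv⟩
          omega
        obtain ⟨u, hu⟩ := Finset.card_eq_one.mp h1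
        refine ⟨u, fun h => h0 ?_, hu⟩
        rw [hu, h]; exact Finset.mem_singleton_self _
  · rintro (h0 | ⟨v, hv, rfl⟩)
    · refine ⟨⟨0, h0⟩, ?_⟩
      haveI : Nonempty (↑(↑s : Set (Fin n))) := ⟨⟨0, by simpa using h0⟩⟩
      refine SimpleGraph.Connected.mk fun a b => ?_
      have reach0 : ∀ c : (↑s : Set (Fin n)),
          (SimpleGraph.induce (↑s) (starGraph n)).Reachable c ⟨0, by simpa using h0⟩ := by
        intro c
        by_cases hc0 : c.1 = 0
        · have hce : c = ⟨0, by simpa using h0⟩ := Subtype.ext (by simpa using hc0)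
          exact hce ▸ SimpleGraph.Reachable.refl _
        · refine SimpleGraph.Adj.reachable ?_
          simp only [SimpleGraph.comap_adj, _root_.starGraph, SimpleGraph.fromRel_adj]
          exact ⟨hc0, Or.inr (Fin.val_zero n)⟩
      exact (reach0 a).trans (reach0 b).symm
    · exact ⟨⟨v, Finset.mem_singleton_self v⟩, singleton_connected _ v⟩

lemma star_count {n : ℕ} (hn : 2 ≤ n) : numSubtrees (starGraph n) = 2 ^ (n - 1) + n - 1 := by
  classical
  haveI : NeZero n := ⟨by omega⟩
  have hchar : Finset.univ.powerset.filter
      (fun s : Finset (Fin n) => s.Nonempty ∧ (SimpleGraph.induce (↑s) (_root_.starGraph n)).Connected)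
      = ((Finset.univ.erase (0 : Fin n)).powerset.image (insert (0 : Fin n))) ∪
        ((Finset.univ.erase (0 : Fin n)).image (fun v => ({v} : Finset (Fin n)))) := by
    ext s
    rw [Finset.mem_filter, Finset.mem_powerset]
    have := star_mem_char hn s
    simp only [Finset.subset_univ, true_and]
    rw [this]
    simp only [Finset.mem_union, Finset.mem_image, Finset.mem_powerset, Finset.mem_erase,
      Finset.mem_univ, and_true]
    constructor
    · rintro (h0 | ⟨v, hv, rfl⟩)
      · left
        refine ⟨s.erase 0, ?_, Finset.insert_erase h0⟩
        intro x hx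
        exact Finset.mem_erase.mpr ⟨(Finset.mem_erase.mp hx).1, Finset.mem_univ x⟩
      · exact Or.inr ⟨v, hv, rfl⟩
    · rintro (⟨t, _, rfl⟩ | ⟨v, hv, rfl⟩)
      · exact Or.inl (Finset.mem_insert_self 0 t)
      · exact Or.inr ⟨v, hv, rfl⟩
  have hdisj : Disjoint ((Finset.univ.erase (0 : Fin n)).powerset.image (insert (0 : Fin n)))
      ((Finset.univ.erase (0 : Fin n)).image (fun v => ({v} : Finset (Fin n)))) := by
    rw [Finset.disjoint_left]
    rintro s hs ht
    simp only [Finset.mem_image, Finset.mem_powerset] at hs ht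
    obtain ⟨t, _, rfl⟩ := hs
    obtain ⟨v, hv, heq⟩ := ht
    have h0 : (0 : Fin n) ∈ ({v} : Finset (Fin n)) := heq ▸ Finset.mem_insert_self 0 t
    exact (Finset.mem_erase.mp hv).1 (Finset.mem_singleton.mp h0).symm
  have hc1 : ((Finset.univ.erase (0 : Fin n)).powerset.image (insert (0 : Fin n))).card
      = 2 ^ (n - 1) := by
    rw [Finset.card_image_of_injOn, Finset.card_powerset, Finset.card_erase_of_mem
      (Finset.mem_univ _), Finset.card_univ, Fintype.card_fin]
    intro t ht t' ht' h
    simp only [Finset.coe_powerset, Set.mem_preimage, Set.mem_powerset_iff,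
      Finset.coe_erase] at ht ht'
    have h0t : (0 : Fin n) ∉ t := fun hm => ((ht hm).2 rfl).elim
    have h0t' : (0 : Fin n) ∉ t' := fun hm => ((ht' hm).2 rfl).elim
    rw [← Finset.erase_insert h0t, ← Finset.erase_insert h0t', h]
  have hc2 : ((Finset.univ.erase (0 : Fin n)).image (fun v => ({v} : Finset (Fin n)))).card
      = n - 1 := by
    rw [Finset.card_image_of_injective _ (fun a b h => Finset.singleton_injective h),
      Finset.card_erase_of_mem (Finset.mem_univ _), Finset.card_univ, Fintype.card_fin]
  have hpow : 1 ≤ 2 ^ (n - 1) := Nat.one_le_two_pow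
  rw [numSubtrees, hchar, Finset.card_union_of_disjoint hdisj, hc1, hc2]
  omega

/-- Among all trees on n ≥ 2 vertices, the star maximizes the number of subtrees,
and this maximum equals 2^(n-1) + n - 1. -/
theorem star_maximizes_subtrees (n : ℕ) (hn : 2 ≤ n) :
    (∀ T : SimpleGraph (Fin n), T.IsTree → numSubtrees T ≤ numSubtrees (starGraph n)) ∧
      numSubtrees (starGraph n) = 2 ^ (n - 1) + n - 1 := by
  have hstar := star_count hn
  exact ⟨fun T hT => by rw [hstar]; exact tree_bound hn T hT, hstar⟩
end

section
/- Among all trees on n ≥ 2 vertices, the path P_n minimizes the number of subtrees, and this minimum number equals n(n+1)/2. -/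
open scoped Classical
open Finset SimpleGraph

-- subpath lemma
lemma exists_subpath {V : Type*} [DecidableEq V] {G : SimpleGraph V} {u v x y : V}
    (p : G.Walk u v) (hp : p.IsPath) (hx : x ∈ p.support) (hy : y ∈ p.support) :
    ∃ r : G.Walk x y, r.IsPath ∧ (∀ z ∈ r.support, z ∈ p.support) ∧
      (p.length ≤ r.length → (x = u ∧ y = v) ∨ (x = v ∧ y = u)) := by
  have hspec := p.take_spec hy
  have hlen : (p.takeUntil y hy).length + (p.dropUntil y hy).length = p.length := by
    have := congrArg SimpleGraph.Walk.length hspec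
    rwa [SimpleGraph.Walk.length_append] at this
  by_cases hxq : x ∈ (p.takeUntil y hy).support
  · set q := p.takeUntil y hy with hq
    refine ⟨q.dropUntil x hxq, (hp.takeUntil hy).dropUntil hxq, ?_, ?_⟩
    · intro z hz
      exact p.support_takeUntil_subset hy (q.support_dropUntil_subset hxq hz)
    · intro hlen2
      have h2 : (q.takeUntil x hxq).length + (q.dropUntil x hxq).length = q.length := by
        have := congrArg SimpleGraph.Walk.length (q.take_spec hxq)
        rwa [SimpleGraph.Walk.length_append] at this
      have h3 : (q.takeUntil x hxq).length = 0 ∧ (p.dropUntil y hy).length = 0 := by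
        constructor <;> omega
      exact Or.inl ⟨(SimpleGraph.Walk.eq_of_length_eq_zero h3.1).symm,
        SimpleGraph.Walk.eq_of_length_eq_zero h3.2⟩
  · have hxd : x ∈ (p.dropUntil y hy).support := by
      rw [← hspec, SimpleGraph.Walk.mem_support_append_iff] at hx
      tauto
    set d := p.dropUntil y hy with hd
    refine ⟨(d.takeUntil x hxd).reverse, ((hp.dropUntil hy).takeUntil hxd).reverse, ?_, ?_⟩
    · intro z hz
      rw [SimpleGraph.Walk.support_reverse, List.mem_reverse] at hz
      exact p.support_dropUntil_subset hy (d.support_takeUntil_subset hxd hz)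
    · intro hlen2
      rw [SimpleGraph.Walk.length_reverse] at hlen2
      have h2 : (d.takeUntil x hxd).length + (d.dropUntil x hxd).length = d.length := by
        have := congrArg SimpleGraph.Walk.length (d.take_spec hxd)
        rwa [SimpleGraph.Walk.length_append] at this
      have h3 : (p.takeUntil y hy).length = 0 ∧ (d.dropUntil x hxd).length = 0 := by
        constructor <;> omega
      exact Or.inr ⟨SimpleGraph.Walk.eq_of_length_eq_zero h3.2,
        (SimpleGraph.Walk.eq_of_length_eq_zero h3.1).symm⟩


lemma walk_ivt {n : ℕ} {s : Set (Fin n)} {a b : ↥s}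
    (w : (SimpleGraph.induce s (SimpleGraph.pathGraph n)).Walk a b) (k : ℕ)
    (hak : ((a : Fin n) : ℕ) ≤ k) (hkb : k ≤ ((b : Fin n) : ℕ)) :
    ∃ z ∈ w.support, ((z : Fin n) : ℕ) = k := by
  induction w with
  | @nil a => exact ⟨a, by simp, le_antisymm hak hkb⟩
  | @cons a c b h w ih =>
    by_cases hka : ((a : Fin n) : ℕ) = k
    · exact ⟨a, SimpleGraph.Walk.start_mem_support _, hka⟩
    · have halt : ((a : Fin n) : ℕ) < k := lt_of_le_of_ne hak hka
      have hadj : (SimpleGraph.pathGraph n).Adj (a : Fin n) (c : Fin n) := h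
      rw [SimpleGraph.pathGraph_adj] at hadj
      have hck : ((c : Fin n) : ℕ) ≤ k := by omega
      obtain ⟨z, hz, hzk⟩ := ih hck hkb
      exact ⟨z, by rw [SimpleGraph.Walk.support_cons]; exact List.mem_cons_of_mem _ hz, hzk⟩

lemma exists_walk_Icc {n : ℕ} (b : Fin n) : ∀ (k : ℕ) (a : Fin n), a ≤ b → (b : ℕ) - (a : ℕ) = k →
    ∃ w : (SimpleGraph.pathGraph n).Walk a b, ∀ z, z ∈ w.support ↔ (a ≤ z ∧ z ≤ b) := by
  intro k
  induction k with
  | zero =>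
    intro a hab h0
    have : a = b := by
      apply Fin.ext
      have := Fin.le_def.mp hab
      omega
    subst this
    exact ⟨SimpleGraph.Walk.nil, by
      intro z
      simp only [SimpleGraph.Walk.support_nil, List.mem_singleton]
      constructor
      · rintro rfl; exact ⟨le_refl _, le_refl _⟩
      · rintro ⟨h1, h2⟩; exact le_antisymm h2 h1⟩
  | succ k ih =>
    intro a hab hk
    have hlt : (a : ℕ) < (b : ℕ) := by omega
    have hn : (a : ℕ) + 1 < n := lt_of_le_of_lt hlt b.isLt
    set a' : Fin n := ⟨(a : ℕ) + 1, hn⟩ with ha'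
    have hval : (a' : ℕ) = (a : ℕ) + 1 := rfl
    have hadj : (SimpleGraph.pathGraph n).Adj a a' := by
      rw [SimpleGraph.pathGraph_adj]; left; rfl
    obtain ⟨w, hw⟩ := ih a' (by rw [Fin.le_def]; omega) (by omega)
    refine ⟨SimpleGraph.Walk.cons hadj w, ?_⟩
    intro z
    rw [SimpleGraph.Walk.support_cons, List.mem_cons, hw]
    simp only [Fin.le_def, Fin.ext_iff]
    omega

lemma connected_eq_Icc {n : ℕ} {S : Finset (Fin n)} (hne : S.Nonempty)
    (hconn : (SimpleGraph.induce (↑S) (SimpleGraph.pathGraph n)).Connected) :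
    S = Finset.Icc (S.min' hne) (S.max' hne) := by
  apply Finset.Subset.antisymm
  · intro x hx
    exact Finset.mem_Icc.mpr ⟨S.min'_le x hx, S.le_max' x hx⟩
  · intro k hk
    rw [Finset.mem_Icc] at hk
    by_contra hkS
    have hm : (S.min' hne : Fin n) ∈ (↑S : Set (Fin n)) := by
      simpa using S.min'_mem hne
    have hM : (S.max' hne : Fin n) ∈ (↑S : Set (Fin n)) := by
      simpa using S.max'_mem hne
    obtain ⟨w⟩ := hconn.preconnected ⟨_, hm⟩ ⟨_, hM⟩
    obtain ⟨z, _, hzk⟩ := walk_ivt w (k : ℕ) (Fin.le_def.mp hk.1) (Fin.le_def.mp hk.2)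
    have : (z : Fin n) = k := Fin.ext hzk
    have : k ∈ S := by
      have hzS := z.2
      rw [this] at hzS
      simpa using hzS
    exact hkS this

lemma path_count {n : ℕ} :
    numSubtrees (SimpleGraph.pathGraph n) = n * (n + 1) / 2 := by
  rw [numSubtrees]
  classical
  have hbij : (Finset.univ.powerset.filter
      (fun s : Finset (Fin n) => s.Nonempty ∧
        (SimpleGraph.induce (↑s) (SimpleGraph.pathGraph n)).Connected)).card
      = (Finset.univ : Finset (Sym2 (Fin n))).card := by
    apply Finset.card_bij (fun S hS =>
      s(S.min' (Finset.mem_filter.mp hS).2.1, S.max' (Finset.mem_filter.mp hS).2.1))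
    · intro S hS; exact Finset.mem_univ _
    · intro S1 h1 S2 h2 heq
      have e1 := connected_eq_Icc (Finset.mem_filter.mp h1).2.1 (Finset.mem_filter.mp h1).2.2
      have e2 := connected_eq_Icc (Finset.mem_filter.mp h2).2.1 (Finset.mem_filter.mp h2).2.2
      rw [Sym2.eq_iff] at heq
      have hmM1 := S1.min'_le _ (S1.max'_mem (Finset.mem_filter.mp h1).2.1)
      have hmM2 := S2.min'_le _ (S2.max'_mem (Finset.mem_filter.mp h2).2.1)
      rcases heq with ⟨hm, hM⟩ | ⟨hm, hM⟩
      · rw [e1, e2, hm, hM]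
      · have h1' : S1.min' _ = S1.max' _ := le_antisymm hmM1 (by rw [hm, hM]; exact hmM2)
        have h2' := hM.symm.trans (h1'.symm.trans hm)
        rw [e1, e2, ← h1', ← h2', hm.trans h2'.symm]
    · intro t _
      induction t using Sym2.ind with
      | _ u v =>
        rcases le_total u v with huv | huv
        · obtain ⟨w, hw⟩ := exists_walk_Icc v ((v : ℕ) - (u : ℕ)) u huv rfl
          have hIcc : Finset.Icc u v = w.support.toFinset := by
            ext z; rw [List.mem_toFinset, hw, Finset.mem_Icc]
          have hmem : Finset.Icc u v ∈ Finset.univ.powerset.filter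
              (fun s : Finset (Fin n) => s.Nonempty ∧
                (SimpleGraph.induce (↑s) (SimpleGraph.pathGraph n)).Connected) := by
            rw [Finset.mem_filter]
            refine ⟨Finset.mem_powerset.mpr (Finset.subset_univ _),
              ⟨u, Finset.mem_Icc.mpr ⟨le_refl _, huv⟩⟩, ?_⟩
            have hset : (↑(Finset.Icc u v) : Set (Fin n)) = {z | z ∈ w.support} := by
              ext z; rw [hIcc]; simp
            rw [hset]
            exact w.connected_induce_support
          refine ⟨Finset.Icc u v, hmem, ?_⟩
          have hu : u ∈ Finset.Icc u v := Finset.mem_Icc.mpr ⟨le_refl _, huv⟩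
          have hv : v ∈ Finset.Icc u v := Finset.mem_Icc.mpr ⟨huv, le_refl _⟩
          have hmin : (Finset.Icc u v).min' ⟨u, hu⟩ = u :=
            le_antisymm (Finset.min'_le _ _ hu) (Finset.le_min' _ _ _
              (fun y hy => (Finset.mem_Icc.mp hy).1))
          have hmax : (Finset.Icc u v).max' ⟨u, hu⟩ = v :=
            le_antisymm (Finset.max'_le _ _ _ (fun y hy => (Finset.mem_Icc.mp hy).2))
              (Finset.le_max' _ _ hv)
          simp only [hmin, hmax]
        · obtain ⟨w, hw⟩ := exists_walk_Icc u ((u : ℕ) - (v : ℕ)) v huv rfl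
          have hIcc : Finset.Icc v u = w.support.toFinset := by
            ext z; rw [List.mem_toFinset, hw, Finset.mem_Icc]
          have hmem : Finset.Icc v u ∈ Finset.univ.powerset.filter
              (fun s : Finset (Fin n) => s.Nonempty ∧
                (SimpleGraph.induce (↑s) (SimpleGraph.pathGraph n)).Connected) := by
            rw [Finset.mem_filter]
            refine ⟨Finset.mem_powerset.mpr (Finset.subset_univ _),
              ⟨v, Finset.mem_Icc.mpr ⟨le_refl _, huv⟩⟩, ?_⟩
            have hset : (↑(Finset.Icc v u) : Set (Fin n)) = {z | z ∈ w.support} := by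
              ext z; rw [hIcc]; simp
            rw [hset]
            exact w.connected_induce_support
          refine ⟨Finset.Icc v u, hmem, ?_⟩
          have hu : v ∈ Finset.Icc v u := Finset.mem_Icc.mpr ⟨le_refl _, huv⟩
          have hv : u ∈ Finset.Icc v u := Finset.mem_Icc.mpr ⟨huv, le_refl _⟩
          have hmin : (Finset.Icc v u).min' ⟨v, hu⟩ = v :=
            le_antisymm (Finset.min'_le _ _ hu) (Finset.le_min' _ _ _
              (fun y hy => (Finset.mem_Icc.mp hy).1))
          have hmax : (Finset.Icc v u).max' ⟨v, hu⟩ = u :=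
            le_antisymm (Finset.max'_le _ _ _ (fun y hy => (Finset.mem_Icc.mp hy).2))
              (Finset.le_max' _ _ hv)
          simp only [hmin, hmax]
          exact Sym2.eq_swap
  rw [hbij, ← Fintype.card, Sym2.card, Fintype.card_fin, Nat.choose_two_right,
    Nat.add_sub_cancel, Nat.mul_comm]


lemma tree_lower_bound {n : ℕ} (T : SimpleGraph (Fin n)) (hT : T.IsTree) :
    n * (n + 1) / 2 ≤ numSubtrees T := by
  classical
  have key : ∀ u v : Fin n, ∃ p : T.Walk u v, p.IsPath := fun u v =>
    (hT.existsUnique_path u v).exists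
  choose P hP using key
  have uniq : ∀ (u v : Fin n) (q : T.Walk u v), q.IsPath → q = P u v := fun u v q hq =>
    (hT.existsUnique_path u v).unique hq (hP u v)
  have hsymm : ∀ a b : Fin n, (P a b).support.toFinset = (P b a).support.toFinset := by
    intro a b
    have : (P a b).reverse = P b a := uniq b a _ ((hP a b).reverse)
    rw [← this, SimpleGraph.Walk.support_reverse, List.toFinset_reverse]
  set F : Sym2 (Fin n) → Finset (Fin n) :=
    Sym2.lift ⟨fun a b => (P a b).support.toFinset, hsymm⟩ with hF
  have hFmk : ∀ a b : Fin n, F s(a, b) = (P a b).support.toFinset := fun a b => rfl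
  have hcard : (Finset.univ : Finset (Sym2 (Fin n))).card ≤ numSubtrees T := by
    apply Finset.card_le_card_of_injOn F
    · intro a _
      induction a using Sym2.ind with
      | _ u v =>
        rw [hFmk]
        rw [Finset.mem_coe, Finset.mem_filter]
        refine ⟨Finset.mem_powerset.mpr (Finset.subset_univ _), ⟨u, by simp⟩, ?_⟩
        have hset : (↑(P u v).support.toFinset : Set (Fin n)) = {z | z ∈ (P u v).support} := by
          ext z; simp
        rw [hset]
        exact (P u v).connected_induce_support
    · intro a _ b _ hab
      induction a using Sym2.ind with
      | _ u v =>
        induction b using Sym2.ind with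
        | _ x y =>
          rw [hFmk, hFmk] at hab
          have hmem : ∀ z : Fin n, z ∈ (P x y).support ↔ z ∈ (P u v).support := by
            intro z
            rw [← List.mem_toFinset, ← List.mem_toFinset, hab]
          have hx : x ∈ (P u v).support := (hmem x).mp (P x y).start_mem_support
          have hy : y ∈ (P u v).support := (hmem y).mp (P x y).end_mem_support
          obtain ⟨r, hr, hrsub, hrlen⟩ := exists_subpath (P u v) (hP u v) hx hy
          have hrP : r = P x y := uniq x y r hr
          have hlensup : (P u v).support.length = (P x y).support.length := by
            rw [← List.toFinset_card_of_nodup (hP u v).support_nodup,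
              ← List.toFinset_card_of_nodup (hP x y).support_nodup, hab]
          have hlen : (P u v).length ≤ r.length := by
            rw [hrP]
            have h1 := (P u v).length_support
            have h2 := (P x y).length_support
            omega
          rcases hrlen hlen with ⟨h1, h2⟩ | ⟨h1, h2⟩
          · rw [h1, h2]
          · rw [h1, h2, Sym2.eq_swap]
  calc n * (n + 1) / 2 = (Finset.univ : Finset (Sym2 (Fin n))).card := by
        rw [← Fintype.card, Sym2.card, Fintype.card_fin, Nat.choose_two_right, Nat.add_sub_cancel, Nat.mul_comm]
    _ ≤ numSubtrees T := hcard


/-- Among all trees on n ≥ 2 vertices, the path minimizes the number of subtrees,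
and this minimum equals n(n+1)/2. -/
theorem path_minimizes_subtrees (n : ℕ) (hn : 2 ≤ n) :
    (∀ T : SimpleGraph (Fin n), T.IsTree →
        numSubtrees (SimpleGraph.pathGraph n) ≤ numSubtrees T) ∧
      numSubtrees (SimpleGraph.pathGraph n) = n * (n + 1) / 2 := by
  refine ⟨fun T hT => ?_, path_count⟩
  rw [path_count]
  exact tree_lower_bound T hT
end

section
/- Among all trees on n ≥ 2 vertices, S_2(T) = Σ_v deg(v)^2 is maximized uniquely by the star K_{1,n-1}, with maximum value (n−1)^2 + (n−1) = n(n−1). -/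
open scoped Classical
open Finset SimpleGraph

lemma starGraph_adj (n : ℕ) [NeZero n] (a b : Fin n) :
    (_root_.starGraph n).Adj a b ↔ a ≠ b ∧ (a = 0 ∨ b = 0) := by
  constructor
  · rintro ⟨hne, h | h⟩
    · exact ⟨hne, Or.inl (Fin.ext (by simpa using h))⟩
    · exact ⟨hne, Or.inr (Fin.ext (by simpa using h))⟩
  · rintro ⟨hne, h | h⟩
    · exact ⟨hne, Or.inl (by simp [h])⟩
    · exact ⟨hne, Or.inr (by simp [h])⟩

noncomputable local instance (n : ℕ) : DecidableRel (_root_.starGraph n).Adj := Classical.decRel _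

lemma iso_degree {V W : Type*} [Fintype V] [Fintype W] {G : SimpleGraph V}
    {H : SimpleGraph W} [DecidableRel G.Adj] [DecidableRel H.Adj]
    (e : G ≃g H) (v : V) : G.degree v = H.degree (e v) := by
  rw [← SimpleGraph.card_neighborSet_eq_degree, ← SimpleGraph.card_neighborSet_eq_degree]
  exact Fintype.card_congr (e.mapNeighborSet v)

lemma starGraph_degree_zero (n : ℕ) [NeZero n] (hn : 2 ≤ n) :
    (_root_.starGraph n).degree (0 : Fin n) = n - 1 := by
  rw [← SimpleGraph.card_neighborFinset_eq_degree]
  have h : (_root_.starGraph n).neighborFinset (0 : Fin n) = Finset.univ.erase 0 := by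
    ext u
    rw [SimpleGraph.mem_neighborFinset, _root_.starGraph_adj]
    constructor
    · rintro ⟨hne, _⟩; exact Finset.mem_erase.mpr ⟨hne.symm, Finset.mem_univ _⟩
    · intro hmem; exact ⟨(Finset.mem_erase.mp hmem).1.symm, Or.inl rfl⟩
  rw [h, Finset.card_erase_of_mem (Finset.mem_univ _), Finset.card_univ, Fintype.card_fin]

lemma starGraph_degree_ne (n : ℕ) [NeZero n] (u : Fin n) (hu : u ≠ 0) :
    (_root_.starGraph n).degree u = 1 := by
  rw [← SimpleGraph.card_neighborFinset_eq_degree]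
  have h : (_root_.starGraph n).neighborFinset u = {0} := by
    ext v
    simp only [SimpleGraph.mem_neighborFinset, _root_.starGraph_adj, Finset.mem_singleton]
    constructor
    · rintro ⟨hne, h | h⟩
      · exact absurd h hu
      · exact h
    · rintro rfl; exact ⟨hu, Or.inr rfl⟩
  rw [h, Finset.card_singleton]

lemma starGraph_sum_sq (n : ℕ) [NeZero n] (hn : 2 ≤ n) :
    ∑ v : Fin n, (_root_.starGraph n).degree v ^ 2 = n * (n - 1) := by
  have h0 : (0 : Fin n) ∈ (Finset.univ : Finset (Fin n)) := Finset.mem_univ _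
  rw [← Finset.add_sum_erase _ _ h0, starGraph_degree_zero n hn]
  have hrest : ∑ v ∈ Finset.univ.erase (0 : Fin n), (_root_.starGraph n).degree v ^ 2
      = ∑ v ∈ Finset.univ.erase (0 : Fin n), 1 := by
    apply Finset.sum_congr rfl
    intro v hv
    rw [starGraph_degree_ne n v (Finset.mem_erase.mp hv).1, one_pow]
  rw [hrest, Finset.sum_const, Finset.card_erase_of_mem h0, Finset.card_univ,
    Fintype.card_fin, smul_eq_mul, mul_one]
  have h1 : 1 ≤ n := by omega
  nlinarith [Nat.sub_add_cancel h1]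

/-- Among trees on n ≥ 2 vertices, S₂(T) = Σ deg(v)² is maximized uniquely (up to
isomorphism) by the star, with maximum value n(n-1). -/
theorem star_maximizes_S2 (n : ℕ) (hn : 2 ≤ n) (T : SimpleGraph (Fin n))
    (hT : T.IsTree) :
    (∑ v : Fin n, T.degree v ^ 2 ≤ n * (n - 1)) ∧
      ((∑ v : Fin n, T.degree v ^ 2 = n * (n - 1)) ↔ Nonempty (T ≃g _root_.starGraph n)) := by
  haveI : NeZero n := ⟨by omega⟩
  have hcard : Fintype.card (Fin n) = n := Fintype.card_fin n
  have hn1 : 1 ≤ n := by omega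
  have hnsub := Nat.sub_add_cancel hn1
  have hedges : T.edgeFinset.card + 1 = n := by
    have h := hT.card_edgeFinset
    rwa [hcard] at h
  have hsum : ∑ v : Fin n, T.degree v = 2 * (n - 1) := by
    rw [T.sum_degrees_eq_twice_card_edges]; omega
  have hub : ∀ v : Fin n, T.degree v ≤ n - 1 := by
    intro v
    have := T.degree_lt_card_verts v
    omega
  have hlb : ∀ v : Fin n, 1 ≤ T.degree v := by
    intro v
    rw [Nat.one_le_iff_ne_zero, ← Nat.pos_iff_ne_zero, T.degree_pos_iff_exists_adj]
    obtain ⟨u, hu⟩ := Fintype.exists_ne_of_one_lt_card (by omega) v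
    obtain ⟨p⟩ := hT.isConnected.preconnected v u
    cases p with
    | nil => exact absurd rfl hu
    | cons h _ => exact ⟨_, h⟩
  have hpt : ∀ v : Fin n, T.degree v ^ 2 + (n - 1) ≤ n * T.degree v := by
    intro v
    have h1 := hlb v
    have h2 := hub v
    nlinarith [hnsub]
  have hle : ∑ v : Fin n, T.degree v ^ 2 ≤ n * (n - 1) := by
    have h := Finset.sum_le_sum (fun v (_ : v ∈ Finset.univ) => hpt v)
    rw [Finset.sum_add_distrib, Finset.sum_const, Finset.card_univ, hcard, smul_eq_mul,
      ← Finset.mul_sum, hsum] at h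
    nlinarith [hnsub]
  refine ⟨hle, ?_, ?_⟩
  · -- equality ⇒ star
    intro heq
    have hpteq : ∀ v : Fin n, T.degree v ^ 2 + (n - 1) = n * T.degree v := by
      have hsum2 : ∑ v : Fin n, (T.degree v ^ 2 + (n - 1)) = ∑ v : Fin n, n * T.degree v := by
        rw [Finset.sum_add_distrib, Finset.sum_const, Finset.card_univ, hcard, smul_eq_mul,
          ← Finset.mul_sum, heq, hsum]
        nlinarith [hnsub]
      intro v
      exact (Finset.sum_eq_sum_iff_of_le (fun i _ => hpt i)).mp hsum2 v (Finset.mem_univ v)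
    have hdeg : ∀ v : Fin n, T.degree v = 1 ∨ T.degree v = n - 1 := by
      intro v
      by_contra hcon
      push_neg at hcon
      have h1 := hlb v; have h2 := hub v; have h3 := hpteq v
      have hd2 : 2 ≤ T.degree v := by omega
      have hd3 : T.degree v ≤ n - 2 := by omega
      have := Nat.sub_add_cancel (by omega : 2 ≤ n)
      nlinarith
    obtain ⟨c, hc⟩ : ∃ c : Fin n, T.degree c = n - 1 := by
      by_contra hno
      push_neg at hno
      have hall : ∀ v : Fin n, T.degree v = 1 := fun v => (hdeg v).resolve_right (hno v)
      have hs : ∑ v : Fin n, T.degree v = n := by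
        simp only [hall]
        rw [Finset.sum_const, Finset.card_univ, hcard, smul_eq_mul, mul_one]
      have hn2 : n = 2 := by omega
      exact hno 0 (by rw [hall]; omega)
    have h1 : ∀ u : Fin n, u ≠ c → T.degree u = 1 := by
      intro u hu
      rcases hdeg u with h | h
      · exact h
      · by_cases hn2 : n = 2
        · omega
        · exfalso
          have hsub : ({c, u} : Finset (Fin n)) ⊆ Finset.univ := Finset.subset_univ _
          have hsplit := (Finset.sum_sdiff hsub (f := fun v => T.degree v)).symm
          have hpair : ∑ v ∈ ({c, u} : Finset (Fin n)), T.degree v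
              = T.degree c + T.degree u := Finset.sum_pair (Ne.symm hu)
          have hcard2 : (Finset.univ \ ({c, u} : Finset (Fin n))).card = n - 2 := by
            rw [Finset.card_sdiff_of_subset hsub, Finset.card_univ, hcard,
              Finset.card_pair (Ne.symm hu)]
          have hrest : n - 2 ≤ ∑ v ∈ Finset.univ \ ({c, u} : Finset (Fin n)), T.degree v := by
            calc n - 2 = ∑ _v ∈ Finset.univ \ ({c, u} : Finset (Fin n)), 1 := by
                  rw [Finset.sum_const, hcard2, smul_eq_mul, mul_one]
              _ ≤ _ := Finset.sum_le_sum (fun v _ => hlb v)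
          rw [hsum, hpair] at hsplit
          rw [hc, h] at hsplit
          omega
    -- c is adjacent to everything else
    have hcadj : ∀ u : Fin n, u ≠ c → T.Adj c u := by
      intro u hu
      have hsubn : T.neighborFinset c ⊆ Finset.univ.erase c := by
        intro w hw
        rw [Finset.mem_erase]
        rw [SimpleGraph.mem_neighborFinset] at hw
        exact ⟨(T.ne_of_adj hw).symm, Finset.mem_univ _⟩
      have hcards : (Finset.univ.erase c).card ≤ (T.neighborFinset c).card := by
        rw [SimpleGraph.card_neighborFinset_eq_degree, hc, Finset.card_erase_of_mem
          (Finset.mem_univ _), Finset.card_univ, hcard]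
      have heqset := Finset.eq_of_subset_of_card_le hsubn hcards
      have : u ∈ T.neighborFinset c := by
        rw [heqset, Finset.mem_erase]
        exact ⟨hu, Finset.mem_univ _⟩
      rwa [SimpleGraph.mem_neighborFinset] at this
    -- no edges between non-centers
    have hnoadj : ∀ u v : Fin n, u ≠ c → v ≠ c → ¬ T.Adj u v := by
      intro u v hu hv hadj
      have hc_mem : c ∈ T.neighborFinset u := by
        rw [SimpleGraph.mem_neighborFinset]
        exact (hcadj u hu).symm
      have hv_mem : v ∈ T.neighborFinset u := by
        rw [SimpleGraph.mem_neighborFinset]; exact hadj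
      have hpairsub : ({c, v} : Finset (Fin n)) ⊆ T.neighborFinset u := by
        intro w hw
        rcases Finset.mem_insert.mp hw with rfl | hw
        · exact hc_mem
        · rw [Finset.mem_singleton] at hw; subst hw; exact hv_mem
      have h2le : 2 ≤ (T.neighborFinset u).card := by
        calc 2 = ({c, v} : Finset (Fin n)).card := (Finset.card_pair (Ne.symm hv)).symm
          _ ≤ _ := Finset.card_le_card hpairsub
      rw [SimpleGraph.card_neighborFinset_eq_degree, h1 u hu] at h2le
      omega
    -- adjacency characterization
    have hadj_iff : ∀ u v : Fin n, T.Adj u v ↔ u ≠ v ∧ (u = c ∨ v = c) := by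
      intro u v
      constructor
      · intro h
        refine ⟨T.ne_of_adj h, ?_⟩
        by_contra hcon
        push_neg at hcon
        exact hnoadj u v hcon.1 hcon.2 h
      · rintro ⟨hne, rfl | rfl⟩
        · exact hcadj v (Ne.symm hne)
        · exact (hcadj u hne).symm
    -- build iso via swap
    refine ⟨⟨Equiv.swap c 0, ?_⟩⟩
    intro u v
    rw [_root_.starGraph_adj, hadj_iff]
    have hswap_eq_zero : ∀ w : Fin n, Equiv.swap c 0 w = 0 ↔ w = c := by
      intro w
      constructor
      · intro h
        have := (Equiv.swap c 0).injective (a₁ := w) (a₂ := c)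
        apply this
        rw [h, Equiv.swap_apply_left]
      · rintro rfl; exact Equiv.swap_apply_left _ _
    constructor
    · rintro ⟨hne, h⟩
      refine ⟨fun hcon => hne (congrArg _ hcon), ?_⟩
      rcases h with h | h
      · exact Or.inl ((hswap_eq_zero u).mp h)
      · exact Or.inr ((hswap_eq_zero v).mp h)
    · rintro ⟨hne, h⟩
      refine ⟨fun hcon => hne ((Equiv.swap c 0).injective hcon), ?_⟩
      rcases h with rfl | rfl
      · exact Or.inl ((hswap_eq_zero u).mpr rfl)
      · exact Or.inr ((hswap_eq_zero v).mpr rfl)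
  · -- star ⇒ equality
    rintro ⟨e⟩
    calc ∑ v : Fin n, T.degree v ^ 2
        = ∑ v : Fin n, (_root_.starGraph n).degree (e v) ^ 2 := by
          apply Finset.sum_congr rfl
          intro v _
          rw [iso_degree e v]
      _ = ∑ w : Fin n, (_root_.starGraph n).degree w ^ 2 :=
          Fintype.sum_equiv e.toEquiv _ _ (fun v => rfl)
      _ = n * (n - 1) := starGraph_sum_sq n hn
end

section
/- Among all nonincreasing degree sequences of trees on n ≥ 2 vertices, the star sequence (n−1, 1, 1, …, 1) majorizes every other tree degree sequence, and the path sequence (2, 2, …, 2, 1, 1) is majorized by every other tree degree sequence. -/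
open Finset

/-- Partial sum of the first k entries of a sequence indexed by Fin n. -/
def partialSum {n : ℕ} (d : Fin n → ℕ) (k : ℕ) : ℕ :=
  ∑ i ∈ Finset.univ.filter (fun i : Fin n => (i : ℕ) < k), d i

/-- `Majorizes b a` : b majorizes a (equal total sums, partial sums of b dominate). -/
def Majorizes {n : ℕ} (b a : Fin n → ℕ) : Prop :=
  (∑ i, a i = ∑ i, b i) ∧ ∀ k < n, partialSum a k ≤ partialSum b k

/-- The nonincreasing degree sequence of the star: (n-1, 1, …, 1). -/
def starSeq (n : ℕ) : Fin n → ℕ := fun i => if (i : ℕ) = 0 then n - 1 else 1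

/-- The nonincreasing degree sequence of the path: (2, …, 2, 1, 1). -/
def pathSeq (n : ℕ) : Fin n → ℕ := fun i => if (i : ℕ) < n - 2 then 2 else 1

lemma Sk_card {n k : ℕ} (hk : k ≤ n) :
    (Finset.univ.filter (fun i : Fin n => (i : ℕ) < k)).card = k := by
  rcases lt_or_eq_of_le hk with h | h
  · have : (Finset.univ.filter (fun i : Fin n => (i : ℕ) < k)) = Finset.Iio ⟨k, h⟩ := by
      ext i; simp [Fin.lt_def]
    rw [this, Fin.card_Iio]
  · subst h
    have h2 : (Finset.univ.filter (fun i : Fin k => (i : ℕ) < k)) = Finset.univ := by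
      ext i; simp [i.isLt]
    rw [h2, card_univ, Fintype.card_fin]

lemma Tk_card {n k : ℕ} (hk : k ≤ n) :
    (Finset.univ.filter (fun i : Fin n => ¬ (i : ℕ) < k)).card = n - k := by
  have h := Finset.card_filter_add_card_filter_not
    (s := (Finset.univ : Finset (Fin n))) (p := fun i : Fin n => (i : ℕ) < k)
  rw [Sk_card hk, card_univ, Fintype.card_fin] at h
  omega

lemma partialSum_add {n : ℕ} (d : Fin n → ℕ) (k : ℕ) :
    partialSum d k + ∑ i ∈ Finset.univ.filter (fun i : Fin n => ¬ (i : ℕ) < k), d i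
      = ∑ i, d i :=
  Finset.sum_filter_add_sum_filter_not _ _ _

lemma partialSum_star {n k : ℕ} (hn : 2 ≤ n) (hk1 : 1 ≤ k) (hk : k ≤ n) :
    partialSum (starSeq n) k = n - 2 + k := by
  have h0 : (0 : ℕ) < n := by omega
  have hz : (⟨0, h0⟩ : Fin n) ∈ Finset.univ.filter (fun i : Fin n => (i : ℕ) < k) := by
    simp; omega
  have hstep : ∀ i ∈ Finset.univ.filter (fun i : Fin n => (i : ℕ) < k),
      starSeq n i = (if i = (⟨0, h0⟩ : Fin n) then n - 2 else 0) + 1 := by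
    intro i _
    simp only [starSeq, Fin.ext_iff]
    split <;> omega
  rw [partialSum, Finset.sum_congr rfl hstep, Finset.sum_add_distrib,
    Finset.sum_ite_eq' _ (⟨0, h0⟩ : Fin n) (fun _ => n - 2), if_pos hz,
    Finset.sum_const, Sk_card hk, smul_eq_mul, mul_one]

lemma partialSum_path {n k : ℕ} (hk : k ≤ n) :
    partialSum (pathSeq n) k = k + min k (n - 2) := by
  have hstep : ∀ i ∈ Finset.univ.filter (fun i : Fin n => (i : ℕ) < k),
      pathSeq n i = 1 + (if (i : ℕ) < n - 2 then 1 else 0) := by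
    intro i _
    simp only [pathSeq]
    split <;> omega
  rw [partialSum, Finset.sum_congr rfl hstep, Finset.sum_add_distrib,
    Finset.sum_const, Sk_card hk, smul_eq_mul, mul_one, Finset.sum_ite, Finset.sum_const_zero,
    Finset.sum_const, smul_eq_mul, mul_one, add_zero, Finset.filter_filter]
  congr 1
  have : (Finset.univ.filter fun i : Fin n => (i : ℕ) < k ∧ (i : ℕ) < n - 2)
      = Finset.univ.filter fun i : Fin n => (i : ℕ) < min k (n - 2) := by
    apply Finset.filter_congr; intro i _; exact (lt_min_iff).symm
  rw [this, Sk_card (by omega)]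

/-- Among nonincreasing degree sequences of trees on n ≥ 2 vertices, the star
sequence majorizes every tree degree sequence and the path sequence is majorized
by every tree degree sequence. -/
theorem star_path_extremal_majorization (n : ℕ) (hn : 2 ≤ n) (d : Fin n → ℕ)
    (hd : Antitone d) (hpos : ∀ i, 1 ≤ d i) (hsum : ∑ i, d i = 2 * (n - 1)) :
    Majorizes (starSeq n) d ∧ Majorizes d (pathSeq n) := by
  have huniv : (Finset.univ : Finset (Fin n)) =
      Finset.univ.filter (fun i : Fin n => (i : ℕ) < n) := by
    ext i; simp [i.isLt]
  have hstarTot : ∑ i, starSeq n i = 2 * (n - 1) := by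
    have := partialSum_star (n := n) (k := n) hn (by omega) le_rfl
    rw [partialSum, ← huniv] at this
    omega
  have hpathTot : ∑ i, pathSeq n i = 2 * (n - 1) := by
    have := partialSum_path (n := n) (k := n) le_rfl
    rw [partialSum, ← huniv] at this
    omega
  -- general facts about d
  have hkey : ∀ k, 1 ≤ k → k ≤ n →
      (2 * k ≤ partialSum d k ∨ partialSum d k = n + k - 2) := by
    intro k hk1 hk
    set T := Finset.univ.filter (fun i : Fin n => ¬ (i : ℕ) < k) with hT
    have hA : partialSum d k + ∑ i ∈ T, d i = 2 * (n - 1) := by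
      rw [partialSum_add, hsum]
    set j : Fin n := ⟨k - 1, by omega⟩ with hj
    by_cases hdj : 2 ≤ d j
    · left
      calc 2 * k = (Finset.univ.filter (fun i : Fin n => (i : ℕ) < k)).card • 2 := by
            rw [Sk_card hk, smul_eq_mul]; ring
        _ ≤ partialSum d k := by
            apply Finset.card_nsmul_le_sum
            intro i hi
            simp only [Finset.mem_filter] at hi
            exact le_trans hdj (hd (by rw [Fin.le_def]; simp [hj]; omega))
    · right
      have hTval : ∑ i ∈ T, d i = n - k := by
        have : ∀ i ∈ T, d i = 1 := by
          intro i hi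
          simp only [hT, Finset.mem_filter] at hi
          have : d i ≤ d j := hd (by rw [Fin.le_def]; simp [hj]; omega)
          have := hpos i
          omega
        rw [Finset.sum_congr rfl this, Finset.sum_const, smul_eq_mul, mul_one, Tk_card hk]
      omega
  have hub : ∀ k, k ≤ n → partialSum d k ≤ 2 * (n - 1) - (n - k) := by
    intro k hk
    have hA : partialSum d k
        + ∑ i ∈ Finset.univ.filter (fun i : Fin n => ¬ (i : ℕ) < k), d i = 2 * (n - 1) := by
      rw [partialSum_add, hsum]
    have hTlb : n - k ≤ ∑ i ∈ Finset.univ.filter (fun i : Fin n => ¬ (i : ℕ) < k), d i := by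
      calc n - k = (Finset.univ.filter (fun i : Fin n => ¬ (i : ℕ) < k)).card • 1 := by
            rw [Tk_card hk, smul_eq_mul, mul_one]
        _ ≤ _ := Finset.card_nsmul_le_sum _ _ _ (fun i _ => hpos i)
    omega
  have hps0 : ∀ (e : Fin n → ℕ), partialSum e 0 = 0 := by
    intro e
    rw [partialSum]
    convert Finset.sum_empty
    ext i; simp
  refine ⟨⟨by rw [hsum, hstarTot], ?_⟩, ⟨by rw [hsum, hpathTot], ?_⟩⟩
  · intro k hkn
    rcases Nat.eq_zero_or_pos k with rfl | hk1
    · simp [hps0]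
    · rw [partialSum_star hn hk1 (le_of_lt hkn)]
      have := hub k (le_of_lt hkn)
      omega
  · intro k hkn
    rcases Nat.eq_zero_or_pos k with rfl | hk1
    · simp [hps0]
    · rw [partialSum_path (le_of_lt hkn)]
      rcases hkey k hk1 (le_of_lt hkn) with h | h <;> omega
end

section
/- If 0 < p < 1, then among all trees on n ≥ 2 vertices, S_p(T) = Σ_v deg(v)^p is minimized by the star K_{1,n-1}; if p > 1, it is maximized by the star. -/
open scoped Classical
open Finset SimpleGraph

/-- S_p(T) = Σ_v deg(v)^p for real p. -/
noncomputable def Sp {n : ℕ} (T : SimpleGraph (Fin n)) (p : ℝ) : ℝ :=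
  ∑ v : Fin n, (T.degree v : ℝ) ^ p

/-- Chord inequality for the convex function `x ↦ x ^ p`, `p ≥ 1`. -/
lemma chord_convex {p M x : ℝ} (hp : 1 ≤ p) (h1 : 1 ≤ x) (hxM : x ≤ M) :
    (M - 1) * x ^ p ≤ (M - x) * 1 + (x - 1) * M ^ p := by
  rcases eq_or_lt_of_le (h1.trans hxM) with hM | hM
  · have hx1 : x = 1 := le_antisymm (hxM.trans hM.symm.le) h1
    rw [hx1, ← hM]
    norm_num
  · have h0 : (0:ℝ) < M - 1 := by linarith
    have ha : 0 ≤ (M - x) / (M - 1) := div_nonneg (by linarith) h0.le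
    have hb : 0 ≤ (x - 1) / (M - 1) := div_nonneg (by linarith) h0.le
    have hab : (M - x) / (M - 1) + (x - 1) / (M - 1) = 1 := by
      rw [← add_div, show M - x + (x - 1) = M - 1 by ring, div_self h0.ne']
    have hkey := (convexOn_rpow hp).2 (Set.mem_Ici.2 zero_le_one)
      (Set.mem_Ici.2 (by linarith : (0:ℝ) ≤ M)) ha hb hab
    simp only [smul_eq_mul] at hkey
    rw [show (M - x) / (M - 1) * 1 + (x - 1) / (M - 1) * M = x by field_simp; ring,
      Real.one_rpow] at hkey
    have h2 := mul_le_mul_of_nonneg_left hkey h0.le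
    calc (M - 1) * x ^ p ≤ (M - 1) * ((M - x) / (M - 1) * 1 + (x - 1) / (M - 1) * M ^ p) := h2
      _ = (M - x) * 1 + (x - 1) * M ^ p := by field_simp

/-- Chord inequality for the concave function `x ↦ x ^ p`, `0 ≤ p ≤ 1`. -/
lemma chord_concave {p M x : ℝ} (hp0 : 0 ≤ p) (hp : p ≤ 1) (h1 : 1 ≤ x) (hxM : x ≤ M) :
    (M - x) * 1 + (x - 1) * M ^ p ≤ (M - 1) * x ^ p := by
  rcases eq_or_lt_of_le (h1.trans hxM) with hM | hM
  · have hx1 : x = 1 := le_antisymm (hxM.trans hM.symm.le) h1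
    rw [hx1, ← hM]
    norm_num
  · have h0 : (0:ℝ) < M - 1 := by linarith
    have ha : 0 ≤ (M - x) / (M - 1) := div_nonneg (by linarith) h0.le
    have hb : 0 ≤ (x - 1) / (M - 1) := div_nonneg (by linarith) h0.le
    have hab : (M - x) / (M - 1) + (x - 1) / (M - 1) = 1 := by
      rw [← add_div, show M - x + (x - 1) = M - 1 by ring, div_self h0.ne']
    have hkey := (Real.concaveOn_rpow hp0 hp).2 (Set.mem_Ici.2 zero_le_one)
      (Set.mem_Ici.2 (by linarith : (0:ℝ) ≤ M)) ha hb hab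
    simp only [smul_eq_mul] at hkey
    rw [show (M - x) / (M - 1) * 1 + (x - 1) / (M - 1) * M = x by field_simp; ring,
      Real.one_rpow] at hkey
    have h2 := mul_le_mul_of_nonneg_left hkey h0.le
    calc (M - x) * 1 + (x - 1) * M ^ p
        = (M - 1) * ((M - x) / (M - 1) * 1 + (x - 1) / (M - 1) * M ^ p) := by field_simp
      _ ≤ (M - 1) * x ^ p := h2

lemma starGraph_degree (n : ℕ) (hn : 2 ≤ n) (v : Fin n) :
    (_root_.starGraph n).degree v = if (v : ℕ) = 0 then n - 1 else 1 := by
  have hz : ((⟨0, by omega⟩ : Fin n) : ℕ) = 0 := rfl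
  rw [SimpleGraph.degree]
  split_ifs with h
  · have : (_root_.starGraph n).neighborFinset v = {v}ᶜ := by
      ext w
      rw [SimpleGraph.mem_neighborFinset]
      simp only [SimpleGraph.mem_neighborFinset, _root_.starGraph, SimpleGraph.fromRel_adj,
        Finset.mem_compl, Finset.mem_singleton]
      constructor
      · rintro ⟨hne, _⟩ hc; exact hne hc.symm
      · intro hw; exact ⟨fun hc => hw hc.symm, Or.inl h⟩
    rw [this, Finset.card_compl, Finset.card_singleton, Fintype.card_fin]
  · have : (_root_.starGraph n).neighborFinset v = {(⟨0, by omega⟩ : Fin n)} := by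
      ext w
      rw [SimpleGraph.mem_neighborFinset]
      simp only [SimpleGraph.mem_neighborFinset, _root_.starGraph, SimpleGraph.fromRel_adj,
        Finset.mem_singleton]
      constructor
      · rintro ⟨hne, hw | hw⟩
        · exact absurd hw h
        · exact Fin.ext (by simpa using hw)
      · rintro rfl
        refine ⟨fun hc => h ?_, Or.inr hz⟩
        rw [hc]
    rw [this, Finset.card_singleton]

lemma Sp_star (n : ℕ) (hn : 2 ≤ n) (p : ℝ) :
    Sp (_root_.starGraph n) p = ((n : ℝ) - 1) ^ p + ((n : ℝ) - 1) := by
  classical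
  set v0 : Fin n := ⟨0, by omega⟩
  have hv0 : (v0 : ℕ) = 0 := rfl
  have hcongr : ∀ v : Fin n, ((_root_.starGraph n).degree v : ℝ) ^ p
      = if v = v0 then ((n : ℝ) - 1) ^ p else 1 := by
    intro v
    rw [starGraph_degree n hn v]
    by_cases h : v = v0
    · subst h
      simp only [hv0, if_true]
      rw [Nat.cast_sub (by omega : 1 ≤ n), Nat.cast_one]
    · have hvne : (v : ℕ) ≠ 0 := fun hc => h (Fin.ext (by simpa using hc))
      rw [if_neg hvne, if_neg h]
      simp [Real.one_rpow]
  have hsplit : ∀ v : Fin n, (if v = v0 then ((n : ℝ) - 1) ^ p else 1)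
      = (if v = v0 then ((n : ℝ) - 1) ^ p - 1 else 0) + 1 := by
    intro v; split_ifs <;> ring
  rw [Sp, Finset.sum_congr rfl (fun v _ => hcongr v),
    Finset.sum_congr rfl (fun v _ => hsplit v), Finset.sum_add_distrib,
    Finset.sum_ite_eq' Finset.univ v0 (fun _ => ((n : ℝ) - 1) ^ p - 1),
    if_pos (Finset.mem_univ v0), Finset.sum_const, Finset.card_univ, Fintype.card_fin,
    nsmul_eq_mul, mul_one]
  ring

/-- For 0 < p < 1 the star minimizes S_p among trees on n ≥ 2 vertices;
for p > 1 it maximizes S_p. -/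
theorem star_extremal_Sp (n : ℕ) (hn : 2 ≤ n) (p : ℝ) (T : SimpleGraph (Fin n))
    (hT : T.IsTree) :
    (0 < p → p < 1 → Sp (starGraph n) p ≤ Sp T p) ∧
      (1 < p → Sp T p ≤ Sp (starGraph n) p) := by
  have hgen : ∀ v w : Fin n, v ≠ w → 1 ≤ T.degree v := by
    intro v w hne
    obtain ⟨q⟩ := hT.isConnected.preconnected v w
    cases q with
    | nil => exact absurd rfl hne
    | cons h _ => exact (T.degree_pos_iff_exists_adj v).2 ⟨_, h⟩
  have hd1 : ∀ v : Fin n, 1 ≤ T.degree v := by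
    intro v
    by_cases h : v = ⟨0, by omega⟩
    · refine hgen v ⟨1, by omega⟩ ?_
      subst h
      intro hc
      have := congrArg Fin.val hc
      simp at this
    · exact hgen v ⟨0, by omega⟩ (fun hc => h hc)
  have hdM : ∀ v : Fin n, T.degree v ≤ n - 1 := by
    intro v
    have := T.degree_lt_card_verts v
    rw [Fintype.card_fin] at this
    omega
  have hsumN : ∑ v : Fin n, T.degree v = 2 * (n - 1) := by
    have h1 := T.sum_degrees_eq_twice_card_edges
    have h2 := hT.card_edgeFinset
    rw [Fintype.card_fin] at h2
    omega
  have hsum : ∑ v : Fin n, (T.degree v : ℝ) = 2 * ((n : ℝ) - 1) := by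
    calc ∑ v : Fin n, (T.degree v : ℝ) = ((∑ v : Fin n, T.degree v : ℕ) : ℝ) := by push_cast; rfl
      _ = ((2 * (n - 1) : ℕ) : ℝ) := by rw [hsumN]
      _ = 2 * ((n : ℝ) - 1) := by
          rw [Nat.cast_mul, Nat.cast_sub (by omega : 1 ≤ n)]; push_cast; ring
  set M : ℝ := (n : ℝ) - 1 with hM
  have hstar := Sp_star n hn p
  have hc1 : ∀ v : Fin n, (1 : ℝ) ≤ (T.degree v : ℝ) := fun v => by exact_mod_cast hd1 v
  have hcM : ∀ v : Fin n, (T.degree v : ℝ) ≤ M := by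
    intro v
    have h := (Nat.cast_le (α := ℝ)).2 (hdM v)
    rwa [Nat.cast_sub (by omega : 1 ≤ n), Nat.cast_one] at h
  rcases eq_or_lt_of_le hn with h2 | h3
  · -- n = 2
    have hdeq : ∀ v : Fin n, T.degree v = 1 := fun v => le_antisymm
      (by have := hdM v; omega) (hd1 v)
    have hSpT : Sp T p = 2 := by
      rw [Sp]
      simp only [hdeq, Nat.cast_one, Real.one_rpow, Finset.sum_const, Finset.card_univ,
        Fintype.card_fin, nsmul_eq_mul, mul_one]
      rw [← h2]; norm_num
    have hM1 : M = 1 := by rw [hM, ← h2]; norm_num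
    have hSpS : Sp (starGraph n) p = 2 := by
      rw [hstar, ← hM, hM1, Real.one_rpow]; norm_num
    exact ⟨fun _ _ => by rw [hSpT, hSpS], fun _ => by rw [hSpT, hSpS]⟩
  · -- n ≥ 3
    have hn3 : (3 : ℝ) ≤ (n : ℝ) := by exact_mod_cast h3
    have hMpos : 0 < M - 1 := by rw [hM]; linarith
    have hexp : ∑ v : Fin n, ((M - (T.degree v : ℝ)) * 1 + ((T.degree v : ℝ) - 1) * M ^ p)
        = (M - 1) * M + (M - 1) * M ^ p := by
      simp only [mul_one]
      rw [Finset.sum_add_distrib, Finset.sum_sub_distrib, Finset.sum_const, Finset.card_univ,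
        Fintype.card_fin, nsmul_eq_mul, hsum, ← Finset.sum_mul, Finset.sum_sub_distrib,
        Finset.sum_const, Finset.card_univ, Fintype.card_fin, nsmul_eq_mul, hsum, mul_one, hM]
      ring
    constructor
    · intro hp0 hp1
      have key := Finset.sum_le_sum
        (fun v (_ : v ∈ Finset.univ) => chord_concave hp0.le hp1.le (hc1 v) (hcM v))
      rw [hexp, ← Finset.mul_sum] at key
      have key2 : (M - 1) * (M ^ p + M) ≤ (M - 1) * ∑ v : Fin n, (T.degree v : ℝ) ^ p := by
        calc (M - 1) * (M ^ p + M) = (M - 1) * M + (M - 1) * M ^ p := by ring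
          _ ≤ _ := key
      have := le_of_mul_le_mul_left key2 hMpos
      rw [hstar]
      exact this
    · intro hp1
      have key := Finset.sum_le_sum
        (fun v (_ : v ∈ Finset.univ) => chord_convex hp1.le (hc1 v) (hcM v))
      rw [hexp, ← Finset.mul_sum] at key
      have key2 : (M - 1) * ∑ v : Fin n, (T.degree v : ℝ) ^ p ≤ (M - 1) * (M ^ p + M) := by
        calc (M - 1) * ∑ v : Fin n, (T.degree v : ℝ) ^ p
            ≤ (M - 1) * M + (M - 1) * M ^ p := key
          _ = (M - 1) * (M ^ p + M) := by ring
      have := le_of_mul_le_mul_left key2 hMpos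
      rw [hstar]
      exact this
end
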